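/- Let S = {(0,0), (0,1), (0,2), (1,0), (1,1), (1,2)} ⊆ ℝ². Then ⋃_{i ≥ 0} Tⁱ(S) equals the set ℚ² of all points of ℝ² with both coordinates rational. -/

import Mathlib

open Set Filter

noncomputable section

/-- The line through two points in the plane `ℝ × ℝ`. -/
def line (a b : ℝ × ℝ) : AffineSubspace ℝ (ℝ × ℝ) := affineSpan ℝ {a, b}

/-- The intersection operation `T`: the set of all intersection points of pairs of
distinct lines through pairs of distinct points of `S`. -/
def interT (S : Set (ℝ × ℝ)) : Set (ℝ × ℝ) :=
  {x | ∃ a ∈ S, ∃ b ∈ S, ∃ c ∈ S, ∃ d ∈ S,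
    a ≠ b ∧ c ≠ d ∧ line a b ≠ line c d ∧ x ∈ line a b ∧ x ∈ line c d}

/-- The set of points of `ℝ × ℝ` with both coordinates rational. -/
def ratPoints : Set (ℝ × ℝ) := {p | ∃ a b : ℚ, p = ((a : ℝ), (b : ℝ))}

namespace SixPts

lemma mem_line_iff {a b x : ℝ × ℝ} :
    x ∈ line a b ↔ ∃ t : ℝ, x.1 = a.1 + t * (b.1 - a.1) ∧ x.2 = a.2 + t * (b.2 - a.2) := by
  have h : ({a, b} : Set (ℝ × ℝ)) = insert a ↑(affineSpan ℝ ({b} : Set (ℝ × ℝ))) := by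
    rw [AffineSubspace.coe_affineSpan_singleton]
  rw [line, h, AffineSubspace.mem_affineSpan_insert_iff
    ((AffineSubspace.mem_affineSpan_singleton ℝ _).mpr rfl) a x]
  constructor
  · rintro ⟨r, p0, hp0, rfl⟩
    rw [AffineSubspace.mem_affineSpan_singleton] at hp0
    subst hp0
    refine ⟨1 - r, ?_, ?_⟩ <;> simp [Prod.smul_def] <;> ring
  · rintro ⟨t, h1, h2⟩
    refine ⟨1 - t, b, (AffineSubspace.mem_affineSpan_singleton ℝ _).mpr rfl, ?_⟩
    have : x = (a.1 + t * (b.1 - a.1), a.2 + t * (b.2 - a.2)) := Prod.ext h1 h2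
    rw [this]
    simp [Prod.ext_iff, Prod.smul_def]
    constructor <;> ring

lemma mem_line_of {a b x : ℝ × ℝ} (t : ℝ) (h1 : x.1 = a.1 + t * (b.1 - a.1))
    (h2 : x.2 = a.2 + t * (b.2 - a.2)) : x ∈ line a b := mem_line_iff.2 ⟨t, h1, h2⟩

lemma left_mem_line (a b : ℝ × ℝ) : a ∈ line a b := mem_line_of 0 (by ring) (by ring)
lemma right_mem_line (a b : ℝ × ℝ) : b ∈ line a b := mem_line_of 1 (by ring) (by ring)

lemma line_ne {a b c d p : ℝ × ℝ} (hp : p ∈ line a b) (hq : p ∉ line c d) :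
    line a b ≠ line c d := fun h => hq (h ▸ hp)

lemma ne_of_fst {p q : ℝ × ℝ} (h : p.1 ≠ q.1) : p ≠ q := fun e => h (by rw [e])
lemma ne_of_snd {p q : ℝ × ℝ} (h : p.2 ≠ q.2) : p ≠ q := fun e => h (by rw [e])

def S₀ : Set (ℝ × ℝ) := {((0 : ℝ), (0 : ℝ)), (0, 1), (0, 2), (1, 0), (1, 1), (1, 2)}

def U : Set (ℝ × ℝ) := ⋃ i, interT^[i] S₀

lemma interT_mono {A B : Set (ℝ × ℝ)} (h : A ⊆ B) : interT A ⊆ interT B := by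
  rintro x ⟨a, ha, b, hb, c, hc, d, hd, rest⟩
  exact ⟨a, h ha, b, h hb, c, h hc, d, h hd, rest⟩

lemma mem_S₀_1 : ((0 : ℝ), (0 : ℝ)) ∈ S₀ := by norm_num [S₀]
lemma mem_S₀_2 : ((0 : ℝ), (1 : ℝ)) ∈ S₀ := by norm_num [S₀, Prod.ext_iff]
lemma mem_S₀_3 : ((0 : ℝ), (2 : ℝ)) ∈ S₀ := by norm_num [S₀, Prod.ext_iff]
lemma mem_S₀_4 : ((1 : ℝ), (0 : ℝ)) ∈ S₀ := by norm_num [S₀, Prod.ext_iff]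
lemma mem_S₀_5 : ((1 : ℝ), (1 : ℝ)) ∈ S₀ := by norm_num [S₀, Prod.ext_iff]
lemma mem_S₀_6 : ((1 : ℝ), (2 : ℝ)) ∈ S₀ := by norm_num [S₀, Prod.ext_iff]

lemma S₀_subset_interT : S₀ ⊆ interT S₀ := by
  intro p hp
  simp only [S₀, Set.mem_insert_iff, Set.mem_singleton_iff] at hp
  rcases hp with h | h | h | h | h | h <;> subst h
  · -- (0,0) : L1 = line (0,0)(0,1), L2 = line (0,0)(1,0)
    exact ⟨_, mem_S₀_1, _, mem_S₀_2, _, mem_S₀_1, _, mem_S₀_4,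
      ne_of_snd (by norm_num), ne_of_fst (by norm_num),
      line_ne (right_mem_line ((0:ℝ),(0:ℝ)) ((0:ℝ),(1:ℝ)))
        (by rw [mem_line_iff]; rintro ⟨t, h1, h2⟩; norm_num at h2),
      left_mem_line _ _, left_mem_line _ _⟩
  · -- (0,1) : L1 = line (0,0)(0,2) (t=1/2), L2 = line (0,1)(1,1)
    exact ⟨_, mem_S₀_1, _, mem_S₀_3, _, mem_S₀_2, _, mem_S₀_5,
      ne_of_snd (by norm_num), ne_of_fst (by norm_num),
      (line_ne (right_mem_line ((0:ℝ),(1:ℝ)) ((1:ℝ),(1:ℝ)))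
        (by rw [mem_line_iff]; rintro ⟨t, h1, h2⟩; norm_num at h1)).symm,
      mem_line_of (1/2) (by norm_num) (by norm_num), left_mem_line _ _⟩
  · -- (0,2) : L1 = line (0,0)(0,2), L2 = line (0,2)(1,2)
    exact ⟨_, mem_S₀_1, _, mem_S₀_3, _, mem_S₀_3, _, mem_S₀_6,
      ne_of_snd (by norm_num), ne_of_fst (by norm_num),
      (line_ne (right_mem_line ((0:ℝ),(2:ℝ)) ((1:ℝ),(2:ℝ)))
        (by rw [mem_line_iff]; rintro ⟨t, h1, h2⟩; norm_num at h1)).symm,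
      right_mem_line _ _, left_mem_line _ _⟩
  · -- (1,0) : L1 = line (1,0)(1,1), L2 = line (0,0)(1,0)
    exact ⟨_, mem_S₀_4, _, mem_S₀_5, _, mem_S₀_1, _, mem_S₀_4,
      ne_of_snd (by norm_num), ne_of_fst (by norm_num),
      (line_ne (left_mem_line ((0:ℝ),(0:ℝ)) ((1:ℝ),(0:ℝ)))
        (by rw [mem_line_iff]; rintro ⟨t, h1, h2⟩; norm_num at h1)).symm,
      left_mem_line _ _, right_mem_line _ _⟩
  · -- (1,1) : L1 = line (1,0)(1,1), L2 = line (0,1)(1,1)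
    exact ⟨_, mem_S₀_4, _, mem_S₀_5, _, mem_S₀_2, _, mem_S₀_5,
      ne_of_snd (by norm_num), ne_of_fst (by norm_num),
      (line_ne (left_mem_line ((0:ℝ),(1:ℝ)) ((1:ℝ),(1:ℝ)))
        (by rw [mem_line_iff]; rintro ⟨t, h1, h2⟩; norm_num at h1)).symm,
      right_mem_line _ _, right_mem_line _ _⟩
  · -- (1,2) : L1 = line (1,0)(1,2), L2 = line (0,2)(1,2)
    exact ⟨_, mem_S₀_4, _, mem_S₀_6, _, mem_S₀_3, _, mem_S₀_6,
      ne_of_snd (by norm_num), ne_of_fst (by norm_num),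
      (line_ne (left_mem_line ((0:ℝ),(2:ℝ)) ((1:ℝ),(2:ℝ)))
        (by rw [mem_line_iff]; rintro ⟨t, h1, h2⟩; norm_num at h1)).symm,
      right_mem_line _ _, right_mem_line _ _⟩

lemma iter_subset_succ : ∀ i, interT^[i] S₀ ⊆ interT^[i + 1] S₀ := by
  intro i
  induction i with
  | zero => simpa using S₀_subset_interT
  | succ n ih =>
      rw [Function.iterate_succ_apply', Function.iterate_succ_apply']
      exact interT_mono ih

lemma iter_mono : ∀ {i j}, i ≤ j → interT^[i] S₀ ⊆ interT^[j] S₀ := by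
  intro i j h
  induction j with
  | zero => simp_all
  | succ n ih =>
      rcases Nat.lt_or_ge i (n+1) with h' | h'
      · exact (ih (Nat.lt_succ_iff.1 h')).trans (iter_subset_succ n)
      · have : i = n + 1 := le_antisymm h h'
        subst this; exact subset_rfl

lemma mem_U {i : ℕ} {x : ℝ × ℝ} (h : x ∈ interT^[i] S₀) : x ∈ U := mem_iUnion.2 ⟨i, h⟩

lemma U_inter {x a b c d : ℝ × ℝ} (ha : a ∈ U) (hb : b ∈ U) (hc : c ∈ U) (hd : d ∈ U)
    (hab : a ≠ b) (hcd : c ≠ d) (hl : line a b ≠ line c d)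
    (h1 : x ∈ line a b) (h2 : x ∈ line c d) : x ∈ U := by
  obtain ⟨i, hi⟩ := mem_iUnion.1 ha
  obtain ⟨j, hj⟩ := mem_iUnion.1 hb
  obtain ⟨k, hk⟩ := mem_iUnion.1 hc
  obtain ⟨l, hl'⟩ := mem_iUnion.1 hd
  set N := max (max i j) (max k l) with hN
  refine mem_U (i := N + 1) ?_
  rw [Function.iterate_succ_apply']
  exact ⟨a, iter_mono (le_max_of_le_left (le_max_left _ _)) hi,
    b, iter_mono (le_max_of_le_left (le_max_right _ _)) hj,
    c, iter_mono (le_max_of_le_right (le_max_left _ _)) hk,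
    d, iter_mono (le_max_of_le_right (le_max_right _ _)) hl',
    hab, hcd, hl, h1, h2⟩

def C (m : ℤ) : Prop :=
  ((m : ℝ), (0 : ℝ)) ∈ U ∧ ((m : ℝ), (1 : ℝ)) ∈ U ∧ ((m : ℝ), (2 : ℝ)) ∈ U

lemma C0 : C 0 := by
  refine ⟨mem_U (i := 0) ?_, mem_U (i := 0) ?_, mem_U (i := 0) ?_⟩ <;>
    · push_cast
      first
      | exact mem_S₀_1
      | exact mem_S₀_2
      | exact mem_S₀_3

lemma C1 : C 1 := by
  refine ⟨mem_U (i := 0) ?_, mem_U (i := 0) ?_, mem_U (i := 0) ?_⟩ <;>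
    · push_cast
      first
      | exact mem_S₀_4
      | exact mem_S₀_5
      | exact mem_S₀_6

lemma col_step {m : ℤ} (h0 : C m) (h1 : C (m + 1)) : C (m + 2) := by
  obtain ⟨a0, a1, a2⟩ := h0
  obtain ⟨b0, b1, b2⟩ := h1
  push_cast at a0 a1 a2 b0 b1 b2
  have p2 : (((m : ℝ) + 2 : ℝ), (2 : ℝ)) ∈ U := by
    refine U_inter a2 b2 a0 b1 (ne_of_fst (by simp)) (ne_of_fst (by simp))
      ((line_ne (left_mem_line ((m : ℝ), 0) ((m : ℝ) + 1, 1))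
        (by rw [mem_line_iff]; rintro ⟨t, e1, e2⟩; simp at e1 e2)).symm)
      (mem_line_of 2 (by simp; try ring) (by simp; try ring))
      (mem_line_of 2 (by simp; try ring) (by simp; try ring))
  have p0 : (((m : ℝ) + 2 : ℝ), (0 : ℝ)) ∈ U := by
    refine U_inter a0 b0 a2 b1 (ne_of_fst (by simp)) (ne_of_fst (by simp))
      ((line_ne (left_mem_line ((m : ℝ), 2) ((m : ℝ) + 1, 1))
        (by rw [mem_line_iff]; rintro ⟨t, e1, e2⟩; simp at e1 e2)).symm)
      (mem_line_of 2 (by simp; try ring) (by simp; try ring))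
      (mem_line_of 2 (by simp; try ring) (by simp; try ring))
  have p1 : (((m : ℝ) + 2 : ℝ), (1 : ℝ)) ∈ U := by
    refine U_inter p0 p2 a1 b1 (ne_of_snd (by simp)) (ne_of_fst (by simp))
      ((line_ne (left_mem_line ((m : ℝ), 1) ((m : ℝ) + 1, 1))
        (by rw [mem_line_iff]; rintro ⟨t, e1, e2⟩; simp at e1 e2)).symm)
      (mem_line_of (1/2) (by simp; try ring) (by simp; try ring))
      (mem_line_of 2 (by simp; try ring) (by simp; try ring))
  refine ⟨?_, ?_, ?_⟩ <;> push_cast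
  exacts [p0, p1, p2]

lemma col_step_down {m : ℤ} (h0 : C m) (h1 : C (m + 1)) : C (m - 1) := by
  obtain ⟨a0, a1, a2⟩ := h0
  obtain ⟨b0, b1, b2⟩ := h1
  push_cast at a0 a1 a2 b0 b1 b2
  have p2 : (((m : ℝ) - 1 : ℝ), (2 : ℝ)) ∈ U := by
    refine U_inter a2 b2 b0 a1 (ne_of_fst (by simp)) (ne_of_fst (by simp))
      ((line_ne (left_mem_line ((m : ℝ) + 1, 0) ((m : ℝ), 1))
        (by rw [mem_line_iff]; rintro ⟨t, e1, e2⟩; simp at e1 e2)).symm)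
      (mem_line_of (-1) (by simp; try ring) (by simp; try ring))
      (mem_line_of 2 (by simp; try ring) (by simp; try ring))
  have p0 : (((m : ℝ) - 1 : ℝ), (0 : ℝ)) ∈ U := by
    refine U_inter a0 b0 b2 a1 (ne_of_fst (by simp)) (ne_of_fst (by simp))
      ((line_ne (left_mem_line ((m : ℝ) + 1, 2) ((m : ℝ), 1))
        (by rw [mem_line_iff]; rintro ⟨t, e1, e2⟩; simp at e1 e2)).symm)
      (mem_line_of (-1) (by simp; try ring) (by simp; try ring))
      (mem_line_of 2 (by simp; try ring) (by simp; try ring))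
  have p1 : (((m : ℝ) - 1 : ℝ), (1 : ℝ)) ∈ U := by
    refine U_inter p0 p2 a1 b1 (ne_of_snd (by simp)) (ne_of_fst (by simp))
      ((line_ne (left_mem_line ((m : ℝ), 1) ((m : ℝ) + 1, 1))
        (by rw [mem_line_iff]; rintro ⟨t, e1, e2⟩; simp at e1 e2; linarith)).symm)
      (mem_line_of (1/2) (by simp; try ring) (by simp; try ring))
      (mem_line_of (-1) (by simp; try ring) (by simp; try ring))
  refine ⟨?_, ?_, ?_⟩ <;> push_cast
  exacts [p0, p1, p2]

lemma colAll : ∀ m : ℤ, C m := by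
  have key : ∀ m : ℤ, C m ∧ C (m + 1) := by
    intro m
    induction m using Int.induction_on with
    | zero => exact ⟨C0, C1⟩
    | succ n ih =>
        refine ⟨ih.2, ?_⟩
        have := col_step ih.1 ih.2
        rwa [show (n : ℤ) + 2 = (n + 1 : ℤ) + 1 by ring] at this
    | pred n ih =>
        refine ⟨col_step_down ih.1 ih.2, ?_⟩
        rw [show (-(n : ℤ) - 1) + 1 = -(n : ℤ) by ring]
        exact ih.1
  exact fun m => (key m).1

def R (k : ℤ) : Prop := ∀ m : ℤ, ((m : ℝ), (k : ℝ)) ∈ U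

lemma row_step {k : ℤ} (h0 : R k) (h1 : R (k + 1)) : R (k + 2) := by
  intro m
  have a0 := (colAll m).1
  have a1 := (colAll m).2.1
  have hc := h0 (m + 2)
  have hd := h1 (m + 1)
  push_cast at hc hd ⊢
  refine U_inter a0 a1 hc hd (ne_of_snd (by norm_num))
    (ne_of_fst (by intro h; simp at h; try linarith))
    ((line_ne (left_mem_line ((m : ℝ) + 2, (k : ℝ)) ((m : ℝ) + 1, (k : ℝ) + 1))
      (by rw [mem_line_iff]; rintro ⟨t, e1, e2⟩; simp at e1 e2)).symm)
    (mem_line_of ((k : ℝ) + 2) (by simp) (by simp; try ring))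
    (mem_line_of 2 (by simp; try ring) (by simp; try ring))

lemma row_step_down {k : ℤ} (h0 : R k) (h1 : R (k + 1)) : R (k - 1) := by
  intro m
  have a0 := (colAll m).1
  have a1 := (colAll m).2.1
  have hc := h0 (m + 1)
  have hd := h1 (m + 2)
  push_cast at hc hd ⊢
  refine U_inter a0 a1 hc hd (ne_of_snd (by norm_num))
    (ne_of_fst (by intro h; simp at h; try linarith))
    ((line_ne (left_mem_line ((m : ℝ) + 1, (k : ℝ)) ((m : ℝ) + 2, (k : ℝ) + 1))
      (by rw [mem_line_iff]; rintro ⟨t, e1, e2⟩; simp at e1 e2)).symm)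
    (mem_line_of ((k : ℝ) - 1) (by simp) (by simp; try ring))
    (mem_line_of (-1) (by simp; try ring) (by simp; try ring))

lemma grid : ∀ k m : ℤ, ((m : ℝ), (k : ℝ)) ∈ U := by
  have key : ∀ k : ℤ, R k ∧ R (k + 1) := by
    intro k
    induction k using Int.induction_on with
    | zero =>
        refine ⟨?_, ?_⟩ <;> intro m <;> push_cast
        · exact (colAll m).1
        · exact (colAll m).2.1
    | succ n ih =>
        refine ⟨ih.2, ?_⟩
        have := row_step ih.1 ih.2
        rwa [show (n : ℤ) + 2 = (n + 1 : ℤ) + 1 by ring] at this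
    | pred n ih =>
        refine ⟨row_step_down ih.1 ih.2, ?_⟩
        rw [show (-(n : ℤ) - 1) + 1 = -(n : ℤ) by ring]
        exact ih.1
  exact fun k => (key k).1

lemma rat0 (q : ℚ) : ((q : ℝ), (0 : ℝ)) ∈ U := by
  have hd := grid (1 - (q.den : ℤ)) q.num
  have h00 : ((0 : ℝ), (0 : ℝ)) ∈ U := mem_U (i := 0) mem_S₀_1
  have h10 : ((1 : ℝ), (0 : ℝ)) ∈ U := mem_U (i := 0) mem_S₀_4
  have h01 : ((0 : ℝ), (1 : ℝ)) ∈ U := mem_U (i := 0) mem_S₀_2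
  have hden : ((q.den : ℝ)) ≠ 0 := by
    have : (0 : ℝ) < (q.den : ℝ) := by exact_mod_cast q.pos
    linarith
  push_cast at hd
  refine U_inter h00 h10 h01 hd (ne_of_fst (by norm_num))
    (ne_of_snd (show (1 : ℝ) ≠ 1 - (q.den : ℝ) by
      have : (0 : ℝ) < (q.den : ℝ) := by exact_mod_cast q.pos
      intro h; linarith))
    ((line_ne (left_mem_line ((0 : ℝ), (1 : ℝ)) ((q.num : ℝ), 1 - (q.den : ℝ)))
      (by rw [mem_line_iff]; rintro ⟨t, e1, e2⟩; simp at e1 e2)).symm)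
    (mem_line_of (q : ℝ) (by simp) (by simp))
    (mem_line_of (1 / (q.den : ℝ))
      (by rw [Rat.cast_def]; push_cast; field_simp; ring)
      (by field_simp; ring))

lemma rat1 (q : ℚ) : ((q : ℝ), (1 : ℝ)) ∈ U := by
  have hd := grid (2 - (q.den : ℤ)) q.num
  have h01 : ((0 : ℝ), (1 : ℝ)) ∈ U := mem_U (i := 0) mem_S₀_2
  have h11 : ((1 : ℝ), (1 : ℝ)) ∈ U := mem_U (i := 0) mem_S₀_5
  have h02 : ((0 : ℝ), (2 : ℝ)) ∈ U := mem_U (i := 0) mem_S₀_3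
  have hden : ((q.den : ℝ)) ≠ 0 := by
    have : (0 : ℝ) < (q.den : ℝ) := by exact_mod_cast q.pos
    linarith
  push_cast at hd
  refine U_inter h01 h11 h02 hd (ne_of_fst (by norm_num))
    (ne_of_snd (show (2 : ℝ) ≠ 2 - (q.den : ℝ) by
      have : (0 : ℝ) < (q.den : ℝ) := by exact_mod_cast q.pos
      intro h; linarith))
    ((line_ne (left_mem_line ((0 : ℝ), (2 : ℝ)) ((q.num : ℝ), 2 - (q.den : ℝ)))
      (by rw [mem_line_iff]; rintro ⟨t, e1, e2⟩; simp at e1 e2)).symm)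
    (mem_line_of (q : ℝ) (by simp) (by simp))
    (mem_line_of (1 / (q.den : ℝ))
      (by rw [Rat.cast_def]; push_cast; field_simp; ring)
      (by field_simp; ring))

lemma ratAll (a b : ℚ) : ((a : ℝ), (b : ℝ)) ∈ U := by
  by_cases hb0 : b = 0
  · subst hb0; push_cast; exact rat0 a
  by_cases hb1 : b = 1
  · subst hb1; push_cast; exact rat1 a
  have h1b : ((1 : ℝ) - (b : ℝ)) ≠ 0 := by
    intro h
    apply hb1
    have : (b : ℝ) = ((1 : ℚ) : ℝ) := by push_cast; linarith
    exact_mod_cast this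
  have p1 := rat0 (a / (1 - b))
  have p2 := rat0 ((a - b) / (1 - b))
  have q1 : ((0 : ℝ), (1 : ℝ)) ∈ U := mem_U (i := 0) mem_S₀_2
  have q2 : ((1 : ℝ), (1 : ℝ)) ∈ U := mem_U (i := 0) mem_S₀_5
  push_cast at p1 p2
  refine U_inter p1 q1 p2 q2 (ne_of_snd (by norm_num)) (ne_of_snd (by norm_num))
    ((line_ne (right_mem_line (((a : ℝ) - (b : ℝ)) / (1 - (b : ℝ)), 0) ((1 : ℝ), (1 : ℝ)))
      (by
        rw [mem_line_iff]
        rintro ⟨t, e1, e2⟩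
        simp at e1 e2
        have ht : t = 1 := by linarith
        rw [ht] at e1
        ring_nf at e1
        norm_num at e1)).symm)
    (mem_line_of (b : ℝ) (by field_simp; try ring) (by simp))
    (mem_line_of (b : ℝ) (by field_simp; try ring) (by simp))

lemma sub_ne_or {a b : ℝ × ℝ} (hab : a ≠ b) : b.1 - a.1 ≠ 0 ∨ b.2 - a.2 ≠ 0 := by
  by_contra h
  push_neg at h
  exact hab (Prod.ext (by linarith [h.1]) (by linarith [h.2]))

lemma line_le_of_parallel {a b c d x : ℝ × ℝ} (hu : b.1 - a.1 ≠ 0 ∨ b.2 - a.2 ≠ 0)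
    (hD : (b.1 - a.1) * (d.2 - c.2) = (b.2 - a.2) * (d.1 - c.1))
    (hxab : x ∈ line a b) (hxcd : x ∈ line c d) : line c d ≤ line a b := by
  rw [mem_line_iff] at hxab hxcd
  obtain ⟨t, ht1, ht2⟩ := hxab
  obtain ⟨s, hs1, hs2⟩ := hxcd
  have key : c ∈ line a b ∧ d ∈ line a b := by
    rcases hu with h | h
    · have hP1 : (d.1 - c.1) / (b.1 - a.1) * (b.1 - a.1) = d.1 - c.1 :=
        div_mul_cancel₀ _ h
      have hP2 : (d.1 - c.1) / (b.1 - a.1) * (b.2 - a.2) = d.2 - c.2 := by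
        rw [div_mul_eq_mul_div, div_eq_iff h]
        linear_combination -hD
      exact ⟨mem_line_of (t - s * ((d.1 - c.1) / (b.1 - a.1)))
          (by linear_combination ht1 - hs1 + s * hP1)
          (by linear_combination ht2 - hs2 + s * hP2),
        mem_line_of (t + (1 - s) * ((d.1 - c.1) / (b.1 - a.1)))
          (by linear_combination ht1 - hs1 - (1 - s) * hP1)
          (by linear_combination ht2 - hs2 - (1 - s) * hP2)⟩
    · have hP2 : (d.2 - c.2) / (b.2 - a.2) * (b.2 - a.2) = d.2 - c.2 :=
        div_mul_cancel₀ _ h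
      have hP1 : (d.2 - c.2) / (b.2 - a.2) * (b.1 - a.1) = d.1 - c.1 := by
        rw [div_mul_eq_mul_div, div_eq_iff h]
        linear_combination hD
      exact ⟨mem_line_of (t - s * ((d.2 - c.2) / (b.2 - a.2)))
          (by linear_combination ht1 - hs1 + s * hP1)
          (by linear_combination ht2 - hs2 + s * hP2),
        mem_line_of (t + (1 - s) * ((d.2 - c.2) / (b.2 - a.2)))
          (by linear_combination ht1 - hs1 - (1 - s) * hP1)
          (by linear_combination ht2 - hs2 - (1 - s) * hP2)⟩
  rw [line, affineSpan_le]
  intro p hp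
  simp only [Set.mem_insert_iff, Set.mem_singleton_iff] at hp
  rcases hp with rfl | rfl
  · exact key.1
  · exact key.2

lemma interT_rat {A : Set (ℝ × ℝ)} (hA : A ⊆ ratPoints) : interT A ⊆ ratPoints := by
  rintro x ⟨a, ha, b, hb, c, hc, d, hd, hab, hcd, hl, hx1, hx2⟩
  obtain ⟨a1, a2, rfl⟩ := hA ha
  obtain ⟨b1, b2, rfl⟩ := hA hb
  obtain ⟨c1, c2, rfl⟩ := hA hc
  obtain ⟨d1, d2, rfl⟩ := hA hd
  by_cases hD : (b1 - a1) * (d2 - c2) - (b2 - a2) * (d1 - c1) = 0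
  · exfalso
    apply hl
    have hDq : (b1 - a1) * (d2 - c2) = (b2 - a2) * (d1 - c1) := by linarith [hD]
    have hDR : ((b1 : ℝ) - a1) * ((d2 : ℝ) - c2) = ((b2 : ℝ) - a2) * ((d1 : ℝ) - c1) := by
      exact_mod_cast hDq
    have hDR2 : ((d1 : ℝ) - c1) * ((b2 : ℝ) - a2) = ((d2 : ℝ) - c2) * ((b1 : ℝ) - a1) := by
      linear_combination -hDR
    exact le_antisymm
      (line_le_of_parallel (sub_ne_or hcd) hDR2 hx2 hx1)
      (line_le_of_parallel (sub_ne_or hab) hDR hx1 hx2)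
  · rw [mem_line_iff] at hx1 hx2
    obtain ⟨t, ht1, ht2⟩ := hx1
    obtain ⟨s, hs1, hs2⟩ := hx2
    dsimp only at ht1 ht2 hs1 hs2
    have hDR : ((b1 : ℝ) - a1) * ((d2 : ℝ) - c2) - ((b2 : ℝ) - a2) * ((d1 : ℝ) - c1) ≠ 0 := by
      intro h
      apply hD
      exact_mod_cast h
    refine ⟨(-(d1 - c1) * ((b2 - a2) * a1 - (b1 - a1) * a2)
        + (b1 - a1) * ((d2 - c2) * c1 - (d1 - c1) * c2))
        / ((b1 - a1) * (d2 - c2) - (b2 - a2) * (d1 - c1)),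
      (-(d2 - c2) * ((b2 - a2) * a1 - (b1 - a1) * a2)
        + (b2 - a2) * ((d2 - c2) * c1 - (d1 - c1) * c2))
        / ((b1 - a1) * (d2 - c2) - (b2 - a2) * (d1 - c1)), ?_⟩
    rw [Prod.ext_iff]
    constructor
    · show x.1 = _
      push_cast
      rw [eq_div_iff hDR]
      linear_combination (-((d1 : ℝ) - c1) * ((b2 : ℝ) - a2)) * ht1
        + (((d1 : ℝ) - c1) * ((b1 : ℝ) - a1)) * ht2
        + (((b1 : ℝ) - a1) * ((d2 : ℝ) - c2)) * hs1
        + (-((b1 : ℝ) - a1) * ((d1 : ℝ) - c1)) * hs2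
    · show x.2 = _
      push_cast
      rw [eq_div_iff hDR]
      linear_combination (-((d2 : ℝ) - c2) * ((b2 : ℝ) - a2)) * ht1
        + (((d2 : ℝ) - c2) * ((b1 : ℝ) - a1)) * ht2
        + (((b2 : ℝ) - a2) * ((d2 : ℝ) - c2)) * hs1
        + (-((b2 : ℝ) - a2) * ((d1 : ℝ) - c1)) * hs2

lemma S₀_rat : S₀ ⊆ ratPoints := by
  intro p hp
  simp only [S₀, Set.mem_insert_iff, Set.mem_singleton_iff] at hp
  rcases hp with h | h | h | h | h | h <;> subst h
  exacts [⟨0, 0, by norm_num⟩, ⟨0, 1, by norm_num⟩, ⟨0, 2, by norm_num⟩,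
    ⟨1, 0, by norm_num⟩, ⟨1, 1, by norm_num⟩, ⟨1, 2, by norm_num⟩]

lemma iter_rat : ∀ i, interT^[i] S₀ ⊆ ratPoints := by
  intro i
  induction i with
  | zero => simpa using S₀_rat
  | succ n ih =>
      rw [Function.iterate_succ_apply']
      exact interT_rat ih


end SixPts

/-- Iterating `T` on `{(0,0), (0,1), (0,2), (1,0), (1,1), (1,2)}` generates all of `ℚ²`. -/
theorem iUnion_interT_sixPoints_eq_ratPoints :
    (⋃ i, interT^[i]
      ({((0 : ℝ), (0 : ℝ)), (0, 1), (0, 2), (1, 0), (1, 1), (1, 2)} : Set (ℝ × ℝ))) =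
      ratPoints := by
  apply Set.eq_of_subset_of_subset
  · intro x hx
    obtain ⟨i, hi⟩ := mem_iUnion.1 hx
    exact SixPts.iter_rat i hi
  · rintro x ⟨a, b, rfl⟩
    exact SixPts.ratAll a b
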